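/- The number of states of the subset seed automaton S_π that are reachable from its initial state is at most the number of states of the Aho–Corasick automaton of π (counting its merged final state as one state); in other words, S_π never has more reachable states than the Aho–Corasick automaton. -/

import Mathlib

variable {A : Type*}

/-- One transition of the subset seed automaton `S_π`: the state `none` is the final sink
state, a state `some (X, t)` is the non-final state `⟨X,t⟩`. -/
def seedStep [DecidableEq A] (one : A) (π : ℕ → Finset A) (s : ℕ) :
    Option (Finset ℕ × ℕ) → A → Option (Finset ℕ × ℕ)
  | none, _ => none
  | some (X, t), a =>
    if a = one then
      if X.sup id + (t + 1) = s then none else some (X, t + 1)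
    else
      let Y : Finset ℕ := ((Finset.Icc 1 (t + 1)).filter fun x => a ∈ π x) ∪
        ((X.filter fun x => x + t + 1 ≤ s ∧ a ∈ π (x + t + 1)).image fun x => x + t + 1)
      if Y.sup id = s then none else some (Y, 0)

/-- Reading a word from a state, applying transitions letter by letter. -/
def seedRead [DecidableEq A] (one : A) (π : ℕ → Finset A) (s : ℕ)
    (q : Option (Finset ℕ × ℕ)) (w : List A) : Option (Finset ℕ × ℕ) :=
  w.foldl (seedStep one π s) q

/-- `π` matches the alignment `w` at the (1-based) position `p`. -/
def seedMatches (one : A) (π : ℕ → Finset A) (s : ℕ) (w : List A) (p : ℕ) : Prop :=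
  1 ≤ p ∧ p + s ≤ w.length + 1 ∧
    ∀ i, 1 ≤ i → i ≤ s → w.getD (p + i - 2) one ∈ π i




section Aux
variable [DecidableEq A] (one : A) (π : ℕ → Finset A) (s : ℕ)

/-- suffix of length ℓ of W matches the prefix π₁..π_ℓ -/
def sufM (W : List A) (ℓ : ℕ) : Prop :=
  ℓ ≤ W.length ∧ ∀ i < ℓ, W.getD (W.length - ℓ + i) one ∈ π (i + 1)

instance (W : List A) (ℓ : ℕ) : Decidable (sufM one π W ℓ) := by
  unfold sufM; infer_instance

/-- π matches somewhere in W -/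
def hasM (W : List A) : Prop :=
  ∃ p, p + s ≤ W.length ∧ ∀ i < s, W.getD (p + i) one ∈ π (i + 1)

/-- number of trailing `one`s -/
def tOnes (W : List A) : ℕ := (W.reverse.takeWhile (· == one)).length

def XW (W : List A) : Finset ℕ :=
  (Finset.range (s + 1)).filter fun x => 1 ≤ x ∧ sufM one π W (x + tOnes one W)

variable {one π s}

lemma mem_XW_iff {W : List A} {x : ℕ} :
    x ∈ XW one π s W ↔ x < s + 1 ∧ 1 ≤ x ∧ sufM one π W (x + tOnes one W) := by
  simp only [XW, Finset.mem_filter, Finset.mem_range]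

lemma getD_concat_last (W : List A) (a d : A) : (W ++ [a]).getD W.length d = a := by simp

lemma getD_concat_lt (W : List A) (a d : A) {i : ℕ} (h : i < W.length) :
    (W ++ [a]).getD i d = W.getD i d := by
  rw [List.getD_eq_getElem _ _ (by simp only [List.length_append, List.length_singleton]; omega), List.getD_eq_getElem _ _ h,
    List.getElem_append_left]

lemma tOnes_le (W : List A) : tOnes one W ≤ W.length := by
  have := (List.takeWhile_prefix (l := W.reverse) (· == one)).length_le
  simpa [tOnes] using this

lemma trailing (W : List A) {i : ℕ} (h : i < tOnes one W) :
    W.getD (W.length - tOnes one W + i) one = one := by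
  set t := tOnes one W with ht
  have htle : t ≤ W.length := tOnes_le W
  have hteq : (W.reverse.takeWhile (· == one)).length = t := rfl
  have hj : t - 1 - i < (W.reverse.takeWhile (· == one)).length := by omega
  have hjr : t - 1 - i < W.reverse.length := by simp only [List.length_reverse]; omega
  have hpre := List.takeWhile_prefix (l := W.reverse) (· == one)
  have he : (W.reverse.takeWhile (· == one))[t - 1 - i] = W.reverse[t - 1 - i] :=
    List.IsPrefix.getElem hpre hj
  have hmem : (W.reverse.takeWhile (· == one))[t - 1 - i] ∈ W.reverse.takeWhile (· == one) :=
    List.getElem_mem _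
  have hp := List.mem_takeWhile_imp hmem
  rw [he] at hp
  have hone' : W.reverse[t - 1 - i] = one := by simpa using hp
  have hidx : W.reverse[t - 1 - i] = W[W.length - t + i]'(by omega) := by
    rw [List.getElem_reverse]
    congr 1
    omega
  rw [List.getD_eq_getElem _ _ (show W.length - t + i < W.length by omega)]
  rw [hidx] at hone'
  exact hone'

lemma tOnes_concat (W : List A) (a : A) :
    tOnes one (W ++ [a]) = if a = one then tOnes one W + 1 else 0 := by
  unfold tOnes
  rw [List.reverse_append]
  by_cases ha : a = one <;> simp [List.takeWhile_cons, ha]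

lemma sufM_concat {W : List A} {ℓ : ℕ} {b : A} (h : sufM one π W ℓ) (hb : b ∈ π (ℓ + 1)) :
    sufM one π (W ++ [b]) (ℓ + 1) := by
  obtain ⟨hlen, h⟩ := h
  refine ⟨by simp only [List.length_append, List.length_singleton]; omega, fun i hi => ?_⟩
  have hidx : (W ++ [b]).length - (ℓ + 1) + i = W.length - ℓ + i := by simp only [List.length_append, List.length_singleton]; omega
  rw [hidx]
  by_cases hlt : i < ℓ
  · rw [getD_concat_lt W b one (by omega)]
    exact h i hlt
  · have heq : i = ℓ := by omega
    subst heq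
    have : W.length - i + i = W.length := by omega
    rw [this, getD_concat_last]
    exact hb

lemma sufM_drop_last {W : List A} {ℓ : ℕ} {b : A} (h : sufM one π (W ++ [b]) (ℓ + 1)) :
    sufM one π W ℓ := by
  obtain ⟨hlen, h⟩ := h
  simp only [List.length_append, List.length_singleton] at hlen
  refine ⟨by omega, fun i hi => ?_⟩
  have := h i (by omega)
  have hidx : (W ++ [b]).length - (ℓ + 1) + i = W.length - ℓ + i := by simp only [List.length_append, List.length_singleton]; omega
  rw [hidx, getD_concat_lt W b one (by omega)] at this
  exact this

lemma sufM_last {W : List A} {ℓ : ℕ} {b : A} (h : sufM one π (W ++ [b]) ℓ) (hℓ : 1 ≤ ℓ) :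
    b ∈ π ℓ := by
  obtain ⟨hlen, h⟩ := h
  simp only [List.length_append, List.length_singleton] at hlen
  have := h (ℓ - 1) (by omega)
  have hidx : (W ++ [b]).length - ℓ + (ℓ - 1) = W.length := by simp only [List.length_append, List.length_singleton]; omega
  rw [hidx, getD_concat_last] at this
  have : b ∈ π (ℓ - 1 + 1) := this
  rwa [Nat.sub_add_cancel hℓ] at this

lemma sufM_tOnes (hone : ∀ i, 1 ≤ i → i ≤ s → one ∈ π i) {W : List A} {k : ℕ}
    (hk : k ≤ tOnes one W) (hks : k ≤ s) : sufM one π W k := by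
  have htle := tOnes_le (one := one) W
  refine ⟨by omega, fun i hi => ?_⟩
  have : W.getD (W.length - k + i) one = one := by
    have := trailing (one := one) W (i := tOnes one W - k + i) (by omega)
    have hidx : W.length - tOnes one W + (tOnes one W - k + i) = W.length - k + i := by omega
    rwa [hidx] at this
  rw [this]
  exact hone (i + 1) (by omega) (by omega)

lemma hasM_of_sufM {W : List A} {ℓ : ℕ} (h : sufM one π W ℓ) (hsl : s ≤ ℓ) :
    hasM one π s W := by
  obtain ⟨hlen, h⟩ := h
  exact ⟨W.length - ℓ, by omega, fun i hi => h i (by omega)⟩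

lemma hasM_concat {W : List A} {a : A} :
    hasM one π s (W ++ [a]) ↔ hasM one π s W ∨ sufM one π (W ++ [a]) s := by
  constructor
  · rintro ⟨p, hp, h⟩
    simp only [List.length_append, List.length_singleton] at hp
    rcases le_or_gt (p + s) W.length with hle | hgt
    · left
      exact ⟨p, hle, fun i hi => by
        rw [← getD_concat_lt W a one (show p + i < W.length by omega)]; exact h i hi⟩
    · right
      refine ⟨by simp only [List.length_append, List.length_singleton]; omega, fun i hi => ?_⟩
      have hidx : (W ++ [a]).length - s + i = p + i := by simp only [List.length_append, List.length_singleton]; omega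
      rw [hidx]
      exact h i hi
  · rintro (⟨p, hp, h⟩ | h)
    · exact ⟨p, by simp only [List.length_append, List.length_singleton]; omega, fun i hi =>
        by rw [getD_concat_lt W a one (show p + i < W.length by omega)]; exact h i hi⟩
    · exact hasM_of_sufM h le_rfl

lemma hasM_nil (hs : 1 ≤ s) : ¬ hasM one π s ([] : List A) := by
  rintro ⟨p, hp, -⟩
  simp at hp
  omega

lemma tOnes_lt (hs : 1 ≤ s) (hone : ∀ i, 1 ≤ i → i ≤ s → one ∈ π i) {W : List A}
    (hM : ¬ hasM one π s W) : tOnes one W < s := by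
  by_contra hc
  push_neg at hc
  exact hM (hasM_of_sufM (sufM_tOnes hone hc le_rfl) le_rfl)

lemma mem_XW_lt {W : List A} (hM : ¬ hasM one π s W) {x : ℕ} (hx : x ∈ XW one π s W) :
    x + tOnes one W < s := by
  rw [XW, Finset.mem_filter] at hx
  obtain ⟨-, -, hsm⟩ := hx
  by_contra hc
  push_neg at hc
  exact hM (hasM_of_sufM hsm hc)

lemma XW_nil : XW one π s ([] : List A) = ∅ := by
  ext x
  simp only [XW, Finset.mem_filter, Finset.mem_range, Finset.notMem_empty, iff_false]
  rintro ⟨-, hx, hle, -⟩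
  simp at hle
  omega

lemma tOnes_nil : tOnes one ([] : List A) = 0 := rfl

lemma sup_eq_iff_mem (hs : 1 ≤ s) {Z : Finset ℕ} (hZ : ∀ y ∈ Z, y ≤ s) :
    Z.sup id = s ↔ s ∈ Z := by
  constructor
  · intro hsup
    have hne : Z.Nonempty := by
      rcases Z.eq_empty_or_nonempty with h | h
      · subst h; simp at hsup; omega
      · exact h
    obtain ⟨m, hmZ, hm⟩ := Finset.exists_mem_eq_sup Z hne id
    have : m = s := by rw [hsup] at hm; exact hm.symm
    subst this; exact hmZ
  · intro hmem
    exact le_antisymm (Finset.sup_le fun y hy => hZ y hy) (Finset.le_sup (f := id) hmem)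

lemma key_one (hs : 1 ≤ s) (hone : ∀ i, 1 ≤ i → i ≤ s → one ∈ π i) {W : List A}
    (hM : ¬ hasM one π s W) :
    hasM one π s (W ++ [one]) ↔ (XW one π s W).sup id + (tOnes one W + 1) = s := by
  set t := tOnes one W with ht
  set X := XW one π s W with hX
  have htlt : t < s := tOnes_lt hs hone hM
  rw [hasM_concat, or_iff_right hM]
  constructor
  · intro h
    have h' : sufM one π W (s - 1) := by
      have : sufM one π (W ++ [one]) ((s - 1) + 1) := by
        rwa [Nat.sub_add_cancel hs]
      exact sufM_drop_last this
    rcases Nat.lt_or_ge t (s - 1) with hlt | hge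
    · set x₀ := s - 1 - t with hx₀
      have hx₀X : x₀ ∈ X := by
        rw [hX, XW, Finset.mem_filter, Finset.mem_range]
        refine ⟨by omega, by omega, ?_⟩
        have : x₀ + t = s - 1 := by omega
        rw [← ht, this]
        exact h'
      have hle : X.sup id ≤ x₀ := Finset.sup_le fun y hy => by
        have := mem_XW_lt hM (hX ▸ hy)
        simp only [id]
        omega
      have hge' : x₀ ≤ X.sup id := Finset.le_sup (f := id) hx₀X
      omega
    · have hXe : X = ∅ := by
        rw [Finset.eq_empty_iff_forall_notMem]
        intro y hy
        have h1 := mem_XW_lt hM (hX ▸ hy)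
        have h2 : 1 ≤ y := by
          rw [hX, XW, Finset.mem_filter] at hy
          exact hy.2.1
        omega
      rw [hXe]
      simp
      omega
  · intro hF
    rcases X.eq_empty_or_nonempty with hXe | hne
    · rw [hXe] at hF
      simp at hF
      have h1 : sufM one π W t := sufM_tOnes hone le_rfl (by omega)
      have h2 : one ∈ π (t + 1) := hone (t + 1) (by omega) (by omega)
      have := sufM_concat h1 h2
      rwa [hF] at this
    · obtain ⟨m, hmX, hm⟩ := Finset.exists_mem_eq_sup X hne id
      have hmem := hmX
      rw [hX, XW, Finset.mem_filter] at hmem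
      have hsm : sufM one π W (m + t) := hmem.2.2
      have hms : m + t + 1 = s := by simp only [id] at hm; omega
      have h2 : one ∈ π (m + t + 1) := hone _ (by omega) (by omega)
      have := sufM_concat hsm h2
      rwa [hms] at this

lemma XW_concat_one (hs : 1 ≤ s) (hone : ∀ i, 1 ≤ i → i ≤ s → one ∈ π i) {W : List A}
    (hM : ¬ hasM one π s W) : XW one π s (W ++ [one]) = XW one π s W := by
  set t := tOnes one W with ht
  ext x
  simp only [XW, Finset.mem_filter, Finset.mem_range, tOnes_concat, if_pos rfl, if_true, ← ht]
  constructor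
  · rintro ⟨h1, h2, h3⟩
    have : sufM one π (W ++ [one]) ((x + t) + 1) := by
      have he : x + (t + 1) = (x + t) + 1 := by omega
      rwa [he] at h3
    exact ⟨h1, h2, sufM_drop_last this⟩
  · rintro ⟨h1, h2, h3⟩
    have hxt : x + t < s := by
      by_contra hc
      push_neg at hc
      exact hM (hasM_of_sufM h3 hc)
    have hπ : one ∈ π (x + t + 1) := hone _ (by omega) (by omega)
    have := sufM_concat h3 hπ
    refine ⟨h1, h2, ?_⟩
    have he : x + (t + 1) = (x + t) + 1 := by omega
    rwa [he]

lemma Y_eq (hs : 1 ≤ s) (hone : ∀ i, 1 ≤ i → i ≤ s → one ∈ π i) {W : List A} {a : A}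
    (hM : ¬ hasM one π s W) (ha : a ≠ one) :
    ((Finset.Icc 1 (tOnes one W + 1)).filter fun x => a ∈ π x) ∪
      (((XW one π s W).filter fun x => x + tOnes one W + 1 ≤ s ∧
        a ∈ π (x + tOnes one W + 1)).image fun x => x + tOnes one W + 1) =
      XW one π s (W ++ [a]) := by
  set t := tOnes one W with ht
  have htlt : t < s := tOnes_lt hs hone hM
  ext y
  simp only [Finset.mem_union, Finset.mem_filter, Finset.mem_Icc, Finset.mem_image,
    XW, Finset.mem_range, tOnes_concat, if_neg ha, Nat.add_zero]
  constructor
  · rintro (⟨⟨hy1, hy2⟩, hya⟩ | ⟨x, ⟨hxX, hxs, hxa⟩, rfl⟩)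
    · refine ⟨by omega, hy1, ?_⟩
      have h1 : sufM one π W (y - 1) := sufM_tOnes hone (by omega) (by omega)
      have h2 : a ∈ π ((y - 1) + 1) := by rwa [Nat.sub_add_cancel hy1]
      have := sufM_concat h1 h2
      rwa [Nat.sub_add_cancel hy1] at this
    · exact ⟨by omega, by omega, sufM_concat hxX.2.2 hxa⟩
  · rintro ⟨hy1, hy2, hsm⟩
    have hya : a ∈ π y := sufM_last hsm hy2
    rcases le_or_gt y (t + 1) with hle | hgt
    · exact Or.inl ⟨⟨hy2, hle⟩, hya⟩
    · right
      refine ⟨y - t - 1, ⟨?_, by omega, by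
        have : y - t - 1 + t + 1 = y := by omega
        rw [this]; exact hya⟩, by omega⟩
      simp only [Finset.mem_filter, Finset.mem_range, ← ht]
      refine ⟨by omega, by omega, ?_⟩
      have : sufM one π (W ++ [a]) ((y - t - 1 + t) + 1) := by
        have he : y - t - 1 + t + 1 = y := by omega
        rwa [he]
      exact sufM_drop_last this

end Aux

section Main
variable [DecidableEq A] {one : A} {π : ℕ → Finset A} {s : ℕ}

open Classical in
theorem seedRead_eq (hs : 1 ≤ s) (hone : ∀ i, 1 ≤ i → i ≤ s → one ∈ π i) (W : List A) :
    seedRead one π s (some (∅, 0)) W =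
      if hasM one π s W then none else some (XW one π s W, tOnes one W) := by
  induction W using List.reverseRecOn with
  | nil =>
    rw [if_neg (hasM_nil hs), XW_nil, tOnes_nil]
    rfl
  | append_singleton W a ih =>
    have hstep : seedRead one π s (some (∅, 0)) (W ++ [a]) =
        seedStep one π s (seedRead one π s (some (∅, 0)) W) a := by
      simp [seedRead, List.foldl_append]
    rw [hstep, ih]
    by_cases hM : hasM one π s W
    · rw [if_pos hM, if_pos (hasM_concat.mpr (Or.inl hM))]
      rfl
    · rw [if_neg hM]
      by_cases ha : a = one
      · rw [ha]
        simp only [seedStep, if_pos rfl, if_true]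
        by_cases hF : (XW one π s W).sup id + (tOnes one W + 1) = s
        · rw [if_pos hF, if_pos ((key_one hs hone hM).mpr hF)]
        · rw [if_neg hF, if_neg (fun h => hF ((key_one hs hone hM).mp h))]
          rw [XW_concat_one hs hone hM, tOnes_concat, if_pos rfl]
      · simp only [seedStep, if_neg ha]
        rw [Y_eq hs hone hM ha]
        have hbound : ∀ y ∈ XW one π s (W ++ [a]), y ≤ s := by
          intro y hy
          rw [XW, Finset.mem_filter, Finset.mem_range] at hy
          omega
        have hmem_iff : (XW one π s (W ++ [a])).sup id = s ↔ hasM one π s (W ++ [a]) := by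
          rw [sup_eq_iff_mem hs hbound, hasM_concat, or_iff_right hM]
          simp only [XW, Finset.mem_filter, Finset.mem_range, tOnes_concat, if_neg ha,
            Nat.add_zero]
          constructor
          · rintro ⟨-, -, h⟩
            exact h
          · intro h
            exact ⟨by omega, hs, h⟩
        by_cases hF : hasM one π s (W ++ [a])
        · rw [if_pos (hmem_iff.mpr hF), if_pos hF]
        · rw [if_neg (fun h => hF (hmem_iff.mp h)), if_neg hF, tOnes_concat, if_neg ha]

end Main

lemma takeWhile_take' {α : Type*} (p : α → Bool) :
    ∀ (l : List α) (k : ℕ), (l.take k).takeWhile p = (l.takeWhile p).take k := by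
  intro l
  induction l with
  | nil => intro k; simp
  | cons h tl ih =>
    intro k
    cases k with
    | zero => simp
    | succ k =>
      by_cases hp : p h
      · simp [List.takeWhile_cons, hp, ih]
      · simp [List.takeWhile_cons, hp]

section Rep
variable [DecidableEq A] {one : A} {π : ℕ → Finset A} {s : ℕ}

lemma exists_rep (hs : 1 ≤ s) (hone : ∀ i, 1 ≤ i → i ≤ s → one ∈ π i) {W : List A}
    (hM : ¬ hasM one π s W) :
    ∃ B : List A, B.length < s ∧ (∀ i < B.length, B.getD i one ∈ π (i + 1)) ∧
      tOnes one B = tOnes one W ∧ XW one π s B = XW one π s W := by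
  set t := tOnes one W with ht
  set X := XW one π s W with hX
  set m := X.sup id with hm
  set ℓ := m + t with hℓ
  have htlt : t < s := tOnes_lt hs hone hM
  have htle : t ≤ W.length := tOnes_le W
  have hkey : sufM one π W ℓ ∧ ℓ < s := by
    rcases X.eq_empty_or_nonempty with hXe | hne
    · have hm0 : m = 0 := by rw [hm, hXe]; simp
      rw [hℓ, hm0, Nat.zero_add]
      exact ⟨sufM_tOnes hone le_rfl (by omega), htlt⟩
    · obtain ⟨y, hyX, hy⟩ := Finset.exists_mem_eq_sup X hne id
      have hmem := hyX
      rw [hX, XW, Finset.mem_filter] at hmem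
      have hylt := mem_XW_lt hM (hX ▸ hyX)
      have hmy : m = y := by rw [hm, hy]; rfl
      rw [hℓ, hmy]
      exact ⟨hmem.2.2, by omega⟩
  obtain ⟨⟨hℓn, hsuf⟩, hℓs⟩ := hkey
  set B := W.drop (W.length - ℓ) with hB
  have hBlen : B.length = ℓ := by rw [hB, List.length_drop]; omega
  have hBget : ∀ i < ℓ, B.getD i one = W.getD (W.length - ℓ + i) one := by
    intro i hi
    rw [List.getD_eq_getElem _ _ (by omega), List.getD_eq_getElem _ _ (by omega)]
    exact List.getElem_drop
  refine ⟨B, by omega, ?_, ?_, ?_⟩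
  · intro i hi
    rw [hBlen] at hi
    rw [hBget i hi]
    exact hsuf i hi
  · rw [hB]
    unfold tOnes
    rw [List.reverse_drop]
    have : W.length - (W.length - ℓ) = ℓ := by omega
    rw [this, takeWhile_take', List.length_take]
    have : (W.reverse.takeWhile (· == one)).length = t := rfl
    rw [this]
    omega
  · have htB : tOnes one B = t := by
      rw [hB]
      unfold tOnes
      rw [List.reverse_drop]
      have h1 : W.length - (W.length - ℓ) = ℓ := by omega
      rw [h1, takeWhile_take', List.length_take]
      have h2 : (W.reverse.takeWhile (· == one)).length = t := rfl
      rw [h2]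
      omega
    have hsufB : ∀ x, sufM one π B (x + t) ↔ x + t ≤ ℓ ∧ sufM one π W (x + t) := by
      intro x
      constructor
      · rintro ⟨hle, h⟩
        rw [hBlen] at hle
        refine ⟨hle, by omega, fun i hi => ?_⟩
        have := h i hi
        rw [hBlen] at this
        rw [hBget (ℓ - (x + t) + i) (by omega)] at this
        have hidx : W.length - ℓ + (ℓ - (x + t) + i) = W.length - (x + t) + i := by omega
        rwa [hidx] at this
      · rintro ⟨hle, hlen, h⟩
        refine ⟨by omega, fun i hi => ?_⟩
        rw [hBlen]
        rw [hBget (ℓ - (x + t) + i) (by omega)]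
        have hidx : W.length - ℓ + (ℓ - (x + t) + i) = W.length - (x + t) + i := by omega
        rw [hidx]
        exact h i hi
    ext x
    rw [mem_XW_iff, mem_XW_iff, htB, ← ht]
    constructor
    · rintro ⟨h1, h2, h3⟩
      exact ⟨h1, h2, ((hsufB x).mp h3).2⟩
    · rintro ⟨h1, h2, h3⟩
      refine ⟨h1, h2, (hsufB x).mpr ⟨?_, h3⟩⟩
      have hxX : x ∈ X := by
        rw [hX, mem_XW_iff]
        exact ⟨h1, h2, h3⟩
      have := Finset.le_sup (f := id) hxX
      simp only [id] at this
      omega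

end Rep

theorem stmt_11' [DecidableEq A] [Fintype A] (one : A) (π : ℕ → Finset A) (s : ℕ)
    (hs : 1 ≤ s) (hone : ∀ i, 1 ≤ i → i ≤ s → one ∈ π i) :
    Set.ncard {q : Option (Finset ℕ × ℕ) |
        ∃ W : List A, seedRead one π s (some (∅, 0)) W = q} ≤
      Set.ncard (({none} : Set (Option (List A))) ∪
        Option.some '' {B : List A | B.length < s ∧
          ∀ i (h : i < B.length), B.get ⟨i, h⟩ ∈ π (i + 1)}) := by
  classical
  have hSfin : {B : List A | B.length < s ∧
      ∀ i (h : i < B.length), B.get ⟨i, h⟩ ∈ π (i + 1)}.Finite :=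
    (List.finite_length_lt (α := A) s).subset fun B hB => hB.1
  have hTfin : (({none} : Set (Option (List A))) ∪
      Option.some '' {B : List A | B.length < s ∧
        ∀ i (h : i < B.length), B.get ⟨i, h⟩ ∈ π (i + 1)}).Finite :=
    (Set.finite_singleton none).union (hSfin.image _)
  set P : Finset ℕ → ℕ → Prop := fun X t =>
    ∃ B : List A, B.length < s ∧ (∀ i < B.length, B.getD i one ∈ π (i + 1)) ∧
      tOnes one B = t ∧ XW one π s B = X with hP
  set f : Option (Finset ℕ × ℕ) → Option (List A) := fun q =>
    match q with
    | none => none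
    | some (X, t) => if h : P X t then some h.choose else none
    with hf
  have hreach : ∀ X t, (some (X, t) ∈ {q : Option (Finset ℕ × ℕ) |
      ∃ W : List A, seedRead one π s (some (∅, 0)) W = q}) → P X t := by
    rintro X t ⟨W, hW⟩
    rw [seedRead_eq hs hone] at hW
    by_cases hM : hasM one π s W
    · rw [if_pos hM] at hW
      exact absurd hW (by simp)
    · rw [if_neg hM] at hW
      have hX : XW one π s W = X := congrArg Prod.fst (Option.some.inj hW)
      have ht : tOnes one W = t := congrArg Prod.snd (Option.some.inj hW)
      obtain ⟨B, h1, h2, h3, h4⟩ := exists_rep hs hone hM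
      exact ⟨B, h1, h2, h3.trans ht, h4.trans hX⟩
  apply Set.ncard_le_ncard_of_injOn f ?_ ?_ hTfin
  · rintro q hq
    match q with
    | none => exact Or.inl rfl
    | some (X, t) =>
      have hex := hreach X t hq
      have : f (some (X, t)) = some hex.choose := dif_pos hex
      rw [this]
      right
      refine ⟨hex.choose, ⟨hex.choose_spec.1, fun i hi => ?_⟩, rfl⟩
      have := hex.choose_spec.2.1 i hi
      rwa [List.getD_eq_getElem _ _ hi] at this
  · rintro q1 h1 q2 h2 hfq
    match q1, q2 with
    | none, none => rfl
    | none, some (X, t) =>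
      rw [show f (some (X, t)) = some (hreach X t h2).choose from dif_pos (hreach X t h2)] at hfq
      exact absurd hfq (by simp [hf])
    | some (X, t), none =>
      rw [show f (some (X, t)) = some (hreach X t h1).choose from dif_pos (hreach X t h1)] at hfq
      exact absurd hfq (by simp [hf])
    | some (X1, t1), some (X2, t2) =>
      rw [show f (some (X1, t1)) = some (hreach X1 t1 h1).choose from dif_pos (hreach X1 t1 h1),
        show f (some (X2, t2)) = some (hreach X2 t2 h2).choose from dif_pos (hreach X2 t2 h2)]
        at hfq
      have hBeq : (hreach X1 t1 h1).choose = (hreach X2 t2 h2).choose := Option.some.inj hfq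
      have s1 := (hreach X1 t1 h1).choose_spec
      have s2 := (hreach X2 t2 h2).choose_spec
      rw [hBeq] at s1
      have ht : t1 = t2 := s1.2.2.1.symm.trans s2.2.2.1
      have hX : X1 = X2 := s1.2.2.2.symm.trans s2.2.2.2
      rw [ht, hX]

/-- The number of states of `S_π` reachable from its initial state is at most the number
of states of the Aho–Corasick automaton of `π` (its non-final states are the words of
length `< s` matched by the corresponding prefix of `π`, plus one merged final state,
modelled here by `none`). -/
theorem stmt_11 [DecidableEq A] [Fintype A] (one : A) (π : ℕ → Finset A) (s : ℕ)
    (hs : 1 ≤ s) (hone : ∀ i, 1 ≤ i → i ≤ s → one ∈ π i) :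
    Set.ncard {q : Option (Finset ℕ × ℕ) |
        ∃ W : List A, seedRead one π s (some (∅, 0)) W = q} ≤
      Set.ncard (({none} : Set (Option (List A))) ∪
        Option.some '' {B : List A | B.length < s ∧
          ∀ i (h : i < B.length), B.get ⟨i, h⟩ ∈ π (i + 1)}) := by
  exact stmt_11' one π s hs hone
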